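/- The Lie algebra structure of the Hochschild cohomology of the trivial odd Moore algebra (Proposition 4.3, concretized): Let R be a commutative ring and let L be the R-module of pairs (B,A) where B ∈ R[[t]] is an odd power series and A ∈ R[[t]] is an even power series with zero constant coefficient. Then the bracket [(B₁,A₁),(B₂,A₂)] := (B₁·B₂' − B₂·B₁', B₁·A₂' − B₂·A₁') (formal derivatives) is well defined on L (the first component is again odd with zero constant coefficient, the second again even with zero constant coefficient) and makes L a Lie algebra over R, in which the pairs (0,A) form an abelian ideal, the pairs (B,0) form a Lie subalgebra, and [(B,0),(0,A)] = (0, B·A'). (This is the semi-direct sum Lie algebra structure of HH*(R[X]/X²) for the trivial odd Moore algebra, where (B,A) represents the normalised derivation B(t)∂_t + A(t)∂_τ and the bracket [B(t)∂_t, A(t)∂_τ] = B(t)A'(t)∂_τ.) -/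

import Mathlib

open PowerSeries

variable {R : Type*} [CommRing R]

/-- A power series is even if all its odd-degree coefficients vanish. -/
def PowerSeries.IsEven (F : R⟦X⟧) : Prop := ∀ n : ℕ, Odd n → coeff n F = 0

/-- A power series is odd if all its even-degree coefficients vanish. -/
def PowerSeries.IsOdd (F : R⟦X⟧) : Prop := ∀ n : ℕ, Even n → coeff n F = 0

/-- Membership in `L`: pairs `(B,A)` with `B` odd and `A` even with zero constant
coefficient (representing the normalised derivation `B(t)∂_t + A(t)∂_τ`). -/
def InL (p : R⟦X⟧ × R⟦X⟧) : Prop :=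
  p.1.IsOdd ∧ p.2.IsEven ∧ constantCoeff p.2 = 0

/-- The bracket `[(B₁,A₁),(B₂,A₂)] = (B₁B₂' − B₂B₁', B₁A₂' − B₂A₁')` induced by the
commutator of the derivations `B(t)∂_t + A(t)∂_τ`. -/
noncomputable def mooreBracket (p q : R⟦X⟧ × R⟦X⟧) : R⟦X⟧ × R⟦X⟧ :=
  (p.1 * q.1.derivativeFun - q.1 * p.1.derivativeFun,
   p.1 * q.2.derivativeFun - q.1 * p.2.derivativeFun)


namespace PowerSeries

lemma derivFun_sub (f g : R⟦X⟧) :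
    (f - g).derivativeFun = f.derivativeFun - g.derivativeFun :=
  map_sub (derivative R) f g

lemma derivFun_zero : (0 : R⟦X⟧).derivativeFun = 0 :=
  map_zero (derivative R)

lemma derivFun_add (f g : R⟦X⟧) :
    (f + g).derivativeFun = f.derivativeFun + g.derivativeFun :=
  map_add (derivative R) f g

lemma IsOdd.constCoeffZero {F : R⟦X⟧} (h : F.IsOdd) : constantCoeff F = 0 := by
  simpa [coeff_zero_eq_constantCoeff] using h 0 (by simp)

lemma IsOdd.deriv {F : R⟦X⟧} (h : F.IsOdd) : F.derivativeFun.IsEven := by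
  intro n hn
  rw [show F.derivativeFun = derivative R F from rfl, coeff_derivative, h (n + 1) hn.add_one, zero_mul]

lemma IsEven.deriv {F : R⟦X⟧} (h : F.IsEven) : F.derivativeFun.IsOdd := by
  intro n hn
  rw [show F.derivativeFun = derivative R F from rfl, coeff_derivative, h (n + 1) hn.add_one, zero_mul]

lemma IsOdd.mul_odd {F G : R⟦X⟧} (hF : F.IsOdd) (hG : G.IsOdd) : (F * G).IsEven := by
  intro n hn
  rw [coeff_mul]
  refine Finset.sum_eq_zero fun ij hij => ?_
  rw [Finset.HasAntidiagonal.mem_antidiagonal] at hij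
  rcases Nat.even_or_odd ij.1 with hi | hi
  · rw [hF _ hi, zero_mul]
  · have hj : Even ij.2 := by
      rcases hi with ⟨a, ha⟩; rcases hn with ⟨b, hb⟩
      exact ⟨b - a, by omega⟩
    rw [hG _ hj, mul_zero]

lemma IsOdd.mul_even {F G : R⟦X⟧} (hF : F.IsOdd) (hG : G.IsEven) : (F * G).IsOdd := by
  intro n hn
  rw [coeff_mul]
  refine Finset.sum_eq_zero fun ij hij => ?_
  rw [Finset.HasAntidiagonal.mem_antidiagonal] at hij
  rcases Nat.even_or_odd ij.1 with hi | hi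
  · rw [hF _ hi, zero_mul]
  · have hj : Odd ij.2 := by
      rcases hi with ⟨a, ha⟩; rcases hn with ⟨b, hb⟩
      exact ⟨b - a - 1, by omega⟩
    rw [hG _ hj, mul_zero]

lemma IsEven.sub {F G : R⟦X⟧} (hF : F.IsEven) (hG : G.IsEven) : (F - G).IsEven := by
  intro n hn; rw [map_sub, hF _ hn, hG _ hn, sub_zero]

lemma IsOdd.sub' {F G : R⟦X⟧} (hF : F.IsOdd) (hG : G.IsOdd) : (F - G).IsOdd := by
  intro n hn; rw [map_sub, hF _ hn, hG _ hn, sub_zero]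

lemma derivativeFun_C_mul (c : R) (f : R⟦X⟧) :
    (C c * f).derivativeFun = C c * f.derivativeFun := by
  rw [← smul_eq_C_mul, derivativeFun_smul, smul_eq_C_mul]

end PowerSeries

/-- **The Lie algebra structure of the Hochschild cohomology of the trivial odd Moore
algebra** (Proposition 4.3): the bracket is well defined on `L` and makes `L` a Lie algebra
over `R`, in which the pairs `(0,A)` form an abelian ideal, the pairs `(B,0)` form a Lie
subalgebra, and `[(B,0),(0,A)] = (0, B·A')`. -/
theorem moore_hochschild_lie_structure (R : Type*) [CommRing R] :
    -- well defined on `L`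
    (∀ p q : R⟦X⟧ × R⟦X⟧, InL p → InL q → InL (mooreBracket p q)) ∧
    -- `R`-bilinearity
    (∀ p p' q : R⟦X⟧ × R⟦X⟧, InL p → InL p' → InL q →
      mooreBracket (p + p') q = mooreBracket p q + mooreBracket p' q ∧
      mooreBracket q (p + p') = mooreBracket q p + mooreBracket q p') ∧
    (∀ (c : R) (p q : R⟦X⟧ × R⟦X⟧), InL p → InL q →
      mooreBracket (c • p) q = c • mooreBracket p q ∧
      mooreBracket p (c • q) = c • mooreBracket p q) ∧
    -- alternating
    (∀ p : R⟦X⟧ × R⟦X⟧, InL p → mooreBracket p p = 0) ∧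
    -- Jacobi identity
    (∀ p q r : R⟦X⟧ × R⟦X⟧, InL p → InL q → InL r →
      mooreBracket (mooreBracket p q) r + mooreBracket (mooreBracket q r) p +
        mooreBracket (mooreBracket r p) q = 0) ∧
    -- the pairs `(0,A)` form an abelian ideal
    (∀ A A' : R⟦X⟧, A.IsEven → constantCoeff A = 0 → A'.IsEven → constantCoeff A' = 0 →
      mooreBracket ((0 : R⟦X⟧), A) ((0 : R⟦X⟧), A') = 0) ∧
    (∀ (p : R⟦X⟧ × R⟦X⟧) (A : R⟦X⟧), InL p → A.IsEven → constantCoeff A = 0 →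
      (mooreBracket p ((0 : R⟦X⟧), A)).1 = 0 ∧ (mooreBracket ((0 : R⟦X⟧), A) p).1 = 0) ∧
    -- the pairs `(B,0)` form a Lie subalgebra
    (∀ B B' : R⟦X⟧, B.IsOdd → B'.IsOdd →
      (mooreBracket (B, (0 : R⟦X⟧)) (B', (0 : R⟦X⟧))).2 = 0) ∧
    -- `[(B,0),(0,A)] = (0, B·A')`
    (∀ B A : R⟦X⟧, B.IsOdd → A.IsEven → constantCoeff A = 0 →
      mooreBracket (B, (0 : R⟦X⟧)) ((0 : R⟦X⟧), A) = ((0 : R⟦X⟧), B * A.derivativeFun)) := by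
  refine ⟨?_, ?_, ?_, ?_, ?_, ?_, ?_, ?_, ?_⟩
  · rintro p q ⟨hp1, hp2, hp0⟩ ⟨hq1, hq2, hq0⟩
    refine ⟨(hp1.mul_even hq1.deriv).sub' (hq1.mul_even hp1.deriv),
      (hp1.mul_odd hq2.deriv).sub (hq1.mul_odd hp2.deriv), ?_⟩
    simp [mooreBracket, map_sub, map_mul, hp1.constCoeffZero, hq1.constCoeffZero]
  · intro p p' q _ _ _
    constructor <;>
      · apply Prod.ext <;>
          simp only [mooreBracket, Prod.fst_add, Prod.snd_add, derivFun_add] <;> ring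
  · intro c p q _ _
    constructor <;>
      · apply Prod.ext <;>
          simp only [mooreBracket, Prod.smul_fst, Prod.smul_snd, smul_eq_C_mul,
            derivativeFun_C_mul] <;> ring
  · intro p _
    apply Prod.ext <;> simp [mooreBracket]
  · intro p q r _ _ _
    apply Prod.ext <;>
      · simp only [mooreBracket, Prod.fst_add, Prod.snd_add, derivFun_sub,
          derivativeFun_mul, smul_eq_mul, Prod.fst_zero, Prod.snd_zero]
        ring
  · intro A A' _ _ _ _
    apply Prod.ext <;> simp [mooreBracket]
  · intro p A hp _ _
    constructor <;> simp [mooreBracket, derivFun_zero]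
  · intro B B' _ _
    simp [mooreBracket, derivFun_zero]
  · intro B A _ _ _
    apply Prod.ext <;> simp [mooreBracket, derivFun_zero]
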